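/- Let n ≥ 4 be even, q = 2^n, α ∈ 𝔽_q^*, and let ω be a fixed element of 𝔽_4 \ 𝔽_2 regarded as an element of 𝔽_q. Then an element x ∈ 𝔽_q satisfies ∇_{F_{0,α}}(a,x) = 2 for all a ∈ 𝔽_q^* if and only if x ∉ {0, α, αω, αω²} and Tr(α/(x+α)) = 1. Equivalently, C-Spec_q(F_{0,α}) = {x ∈ 𝔽_q \ {0, α, αω, αω²} : Tr(α/(x+α)) = 1}. -/

import Mathlib

set_option linter.unusedSectionVars false
set_option maxHeartbeats 1000000


namespace APNPaper

open Finset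

variable {F : Type*} [Field F] [Fintype F] [DecidableEq F]

/-- `δ_G(a,b)`: the number of `x` with `D_aG(x) = G(x) + G(x+a) = b`. -/
def delta (G : F → F) (a b : F) : ℕ :=
  (Finset.univ.filter fun x : F => G x + G (x + a) = b).card

/-- `∇_G(a,x) = δ_G(a, D_aG(x))`. -/
def nabla (G : F → F) (a x : F) : ℕ := delta G a (G x + G (x + a))

/-- `G` is almost perfect nonlinear. -/
def IsAPN (G : F → F) : Prop := ∀ a : F, a ≠ 0 → ∀ b : F, delta G a b ≤ 2

/-- The derivative `D_aG` is 2-to-1, i.e. `G` satisfies property `(p_a)`. -/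
def TwoToOne (G : F → F) (a : F) : Prop :=
  ∀ b : F, delta G a b = 0 ∨ delta G a b = 2

instance instDecTwoToOne (G : F → F) (a : F) : Decidable (TwoToOne G a) := by
  unfold TwoToOne; infer_instance

/-- The row spectrum `R-Spec_q(G)`. -/
def RSpec (G : F → F) : Finset F :=
  (Finset.univ.erase (0 : F)).filter fun a => TwoToOne G a

/-- `S_a = {x : ∇_G(a,x) = 2}`. -/
def Sset (G : F → F) (a : F) : Finset F :=
  Finset.univ.filter fun x : F => nabla G a x = 2

/-- `w_{S_a^c} = Σ_{b : δ_G(a,b) > 2} (δ_G(a,b)/2)²`. -/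
def wS (G : F → F) (a : F) : ℤ :=
  ∑ b : F, if 2 < delta G a b then ((delta G a b / 2 : ℕ) : ℤ) ^ 2 else 0

/-- `χ_a = 1` if `S_a = 𝔽_q`, and `0` otherwise. -/
def chi (G : F → F) (a : F) : ℤ :=
  if Sset G a = Finset.univ then 1 else 0

/-- `𝒟(G) = Σ_{a ≠ 0} (|S_a| − w_{S_a^c} + χ_a)`. -/
def Dscr (G : F → F) : ℤ :=
  ∑ a ∈ Finset.univ.erase (0 : F), (((Sset G a).card : ℤ) - wS G a + chi G a)

/-- The APN-defect `APN-def(G) = q² − 1 − 𝒟(G)`. -/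
def APNdef (G : F → F) : ℤ := (Fintype.card F : ℤ) ^ 2 - 1 - Dscr G

/-- The differential uniformity `δ_G`. -/
def diffUnif (G : F → F) : ℕ :=
  ((Finset.univ.erase (0 : F)) ×ˢ Finset.univ).sup fun p => delta G p.1 p.2

/-- The set of vanishing flats of `G`. -/
def VF (G : F → F) : Set (Finset F) :=
  {S | ∃ x y z : F, x ≠ y ∧ x ≠ z ∧ y ≠ z ∧
    G x + G y + G z + G (x + y + z) = 0 ∧ S = ({x, y, z, x + y + z} : Finset F)}

/-- The absolute trace `Tr(z) = z + z² + ⋯ + z^{2^{n-1}}` (with values in `{0,1} ⊆ F`). -/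
def Tr (n : ℕ) (z : F) : F := ∑ i ∈ Finset.range n, z ^ (2 ^ i)

/-- The modification `F_{0,α}` of the inverse function: the values of the inverse
function at `0` and `α` are swapped. -/
def Fmod (α : F) : F → F :=
  fun x => if x = 0 then α⁻¹ else if x = α then 0 else x⁻¹

lemma two_eq_zero' [CharP F 2] : (2 : F) = 0 := CharTwo.two_eq_zero

lemma Tr_add (n : ℕ) [CharP F 2] (a b : F) : Tr n (a + b) = Tr n a + Tr n b := by
  unfold Tr
  rw [← Finset.sum_add_distrib]
  haveI := Fact.mk Nat.prime_two
  exact Finset.sum_congr rfl fun i _ => add_pow_char_pow a b 2 i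

lemma pow_card_eq (n : ℕ) (hcard : Fintype.card F = 2 ^ n) (z : F) : z ^ (2 ^ n) = z := by
  rw [← hcard]; exact FiniteField.pow_card z

lemma Tr_sq (n : ℕ) (hcard : Fintype.card F = 2 ^ n) (z : F) : Tr n (z ^ 2) = Tr n z := by
  have h1 : ∀ i : ℕ, (z ^ 2) ^ (2 ^ i) = z ^ (2 ^ (i + 1)) := by
    intro i; rw [← pow_mul, pow_succ, mul_comm (2^i) 2]
  have key : ∑ i ∈ Finset.range (n+1), z ^ (2 ^ i)
      = Tr n (z^2) + z ^ (2^0) := by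
    rw [Finset.sum_range_succ']
    congr 1
    unfold Tr
    exact Finset.sum_congr rfl fun i _ => (h1 i).symm
  have key2 : ∑ i ∈ Finset.range (n+1), z ^ (2 ^ i) = Tr n z + z ^ (2 ^ n) := by
    rw [Finset.sum_range_succ]; rfl
  have := key.symm.trans key2
  rw [pow_card_eq n hcard, pow_zero, pow_one] at this
  exact add_right_cancel this

lemma Tr_AS (n : ℕ) [CharP F 2] (hcard : Fintype.card F = 2 ^ n) (t : F) :
    Tr n (t ^ 2 + t) = 0 := by
  rw [Tr_add, Tr_sq n hcard, CharTwo.add_self_eq_zero]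

lemma Tr_one (n : ℕ) [CharP F 2] (heven : Even n) : Tr n (1 : F) = 0 := by
  unfold Tr
  simp only [one_pow, Finset.sum_const, Finset.card_range, nsmul_eq_mul, mul_one]
  obtain ⟨m, hm⟩ := heven
  have : (n : F) = 2 * m := by rw [hm]; push_cast; ring
  rw [this, CharTwo.two_eq_zero, zero_mul]

lemma Tr_mem (n : ℕ) [CharP F 2] (hcard : Fintype.card F = 2 ^ n) (z : F) :
    Tr n z = 0 ∨ Tr n z = 1 := by
  have hsq : Tr n z ^ 2 = Tr n (z ^ 2) := by
    unfold Tr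
    rw [show (∑ i ∈ Finset.range n, z ^ 2 ^ i) ^ 2 = frobenius F 2 (∑ i ∈ Finset.range n, z ^ 2 ^ i) from rfl,
      map_sum (frobenius F 2)]
    simp only [frobenius_def]
    exact Finset.sum_congr rfl fun i _ => by rw [← pow_mul, ← pow_mul, mul_comm]
  have h : Tr n z * (Tr n z + 1) = 0 := by
    have : Tr n z ^ 2 = Tr n z := by rw [hsq, Tr_sq n hcard]
    linear_combination this + Tr n z * (two_eq_zero' (F := F))
  rcases mul_eq_zero.mp h with h | h
  · exact Or.inl h
  · right; linear_combination h - two_eq_zero' (F := F)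


lemma AS_exists (n : ℕ) [CharP F 2] (hn : 1 ≤ n) (hcard : Fintype.card F = 2 ^ n)
    (c : F) (hc : Tr n c = 0) : ∃ t : F, t ^ 2 + t = c := by
  classical
  have hAS : ∀ t : F, Tr n (t ^ 2 + t) = 0 := fun t => Tr_AS n hcard t
  set ψ : F → F := fun t => t ^ 2 + t with hψ
  set I : Finset F := Finset.univ.image ψ with hI
  set K : Finset F := Finset.univ.filter (fun z : F => Tr n z = 0) with hK
  -- fibers of ψ have exactly 2 elements
  have hfib : ∀ t : F, Finset.univ.filter (fun z : F => ψ z = ψ t) = {t, t + 1} := by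
    intro t
    ext z
    simp only [Finset.mem_filter, Finset.mem_univ, true_and, Finset.mem_insert,
      Finset.mem_singleton]
    constructor
    · intro h
      have : (z + t) * (z + t + 1) = 0 := by
        have h2 : (2 : F) = 0 := CharTwo.two_eq_zero
        simp only [hψ] at h
        linear_combination h + (z * t + t ^ 2 + t) * h2
      rcases mul_eq_zero.mp this with h' | h'
      · left; linear_combination h' - t * (CharTwo.two_eq_zero (R := F))
      · right; linear_combination h' - (t + 1) * (CharTwo.two_eq_zero (R := F))
    · rintro (rfl | rfl)
      · rfl
      · simp only [hψ]
        linear_combination (t + 1) * (CharTwo.two_eq_zero (R := F))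
  have hone : (1 : F) ≠ 0 := one_ne_zero
  have hcardfib : ∀ t : F, (Finset.univ.filter (fun z : F => ψ z = ψ t)).card = 2 := by
    intro t
    rw [hfib t, Finset.card_insert_of_notMem, Finset.card_singleton]
    simp only [Finset.mem_singleton]
    intro h
    exact one_ne_zero (by linear_combination -h : (1 : F) = 0)
  -- |I| * 2 = q
  have hIcard : I.card * 2 = 2 ^ n := by
    rw [← hcard, ← Finset.card_univ (α := F)]
    have hcf := Finset.card_eq_sum_card_fiberwise (f := ψ) (s := Finset.univ) (t := I)
      (fun x _ => Finset.mem_image_of_mem ψ (Finset.mem_univ x))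
    rw [hcf, Finset.sum_congr rfl (fun b hb => ?_), Finset.sum_const, smul_eq_mul, mul_comm]
    obtain ⟨t, _, rfl⟩ := Finset.mem_image.mp hb
    exact hcardfib t
  -- K has at most 2^(n-1) elements via polynomial roots
  have hP : (∑ i ∈ Finset.range n, (Polynomial.X : Polynomial F) ^ (2 ^ i)) ≠ 0 := by
    intro h
    have h1 : (∑ i ∈ Finset.range n, (Polynomial.X : Polynomial F) ^ (2 ^ i)).coeff 1 = 1 := by
      rw [Polynomial.finset_sum_coeff]
      rw [Finset.sum_eq_single 0]
      · simp
      · intro i hi hne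
        rw [Polynomial.coeff_X_pow]
        have h2i := Nat.one_lt_two_pow_iff.mpr hne
        rw [if_neg (by omega)]
      · intro h'; exact absurd (Finset.mem_range.mpr (by omega)) h'
    rw [h] at h1
    simp at h1
  have hdeg : (∑ i ∈ Finset.range n, (Polynomial.X : Polynomial F) ^ (2 ^ i)).natDegree ≤ 2 ^ (n - 1) := by
    apply Polynomial.natDegree_sum_le_of_forall_le
    intro i hi
    rw [Polynomial.natDegree_X_pow]
    have := Finset.mem_range.mp hi
    exact Nat.pow_le_pow_right (by norm_num) (by omega)
  have hKsub : K ⊆ (∑ i ∈ Finset.range n, (Polynomial.X : Polynomial F) ^ (2 ^ i)).roots.toFinset := by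
    intro z hz
    rw [Multiset.mem_toFinset, Polynomial.mem_roots hP, Polynomial.IsRoot,
      Polynomial.eval_finset_sum]
    simp only [Polynomial.eval_pow, Polynomial.eval_X]
    exact (Finset.mem_filter.mp hz).2
  have hKcard : K.card ≤ 2 ^ (n - 1) := by
    calc K.card ≤ (∑ i ∈ Finset.range n, (Polynomial.X : Polynomial F) ^ (2 ^ i)).roots.toFinset.card :=
          Finset.card_le_card hKsub
      _ ≤ Multiset.card (∑ i ∈ Finset.range n, (Polynomial.X : Polynomial F) ^ (2 ^ i)).roots :=
          Multiset.toFinset_card_le _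
      _ ≤ (∑ i ∈ Finset.range n, (Polynomial.X : Polynomial F) ^ (2 ^ i)).natDegree :=
          (Polynomial.card_roots' _)
      _ ≤ 2 ^ (n - 1) := hdeg
  have hIK : I ⊆ K := by
    intro z hz
    obtain ⟨t, _, rfl⟩ := Finset.mem_image.mp hz
    exact Finset.mem_filter.mpr ⟨Finset.mem_univ _, hAS t⟩
  have h2n : 2 ^ n = 2 ^ (n - 1) * 2 := by
    rw [← pow_succ]; congr 1; omega
  have : K.card ≤ I.card := by
    have : I.card = 2 ^ (n - 1) := by omega
    omega
  have hKI : I = K := Finset.eq_of_subset_of_card_le hIK this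
  have : c ∈ I := by rw [hKI]; exact Finset.mem_filter.mpr ⟨Finset.mem_univ _, hc⟩
  obtain ⟨t, _, ht⟩ := Finset.mem_image.mp this
  exact ⟨t, ht⟩


lemma nabla_eq_two_iff (G : F → F) [CharP F 2] (a x : F) (ha : a ≠ 0) :
    nabla G a x = 2 ↔
      ∀ y : F, G y + G (y + a) = G x + G (x + a) → y = x ∨ y = x + a := by
  classical
  have hxa : x ≠ x + a := fun h => ha (by linear_combination -h)
  have hxmem : x ∈ Finset.univ.filter
      (fun y : F => G y + G (y + a) = G x + G (x + a)) := by
    simp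
  have hxamem : (x + a) ∈ Finset.univ.filter
      (fun y : F => G y + G (y + a) = G x + G (x + a)) := by
    have : x + a + a = x := by
      rw [add_assoc, CharTwo.add_self_eq_zero, add_zero]
    simp only [Finset.mem_filter, Finset.mem_univ, true_and, this]
    ring
  have hpairsub : ({x, x + a} : Finset F) ⊆
      Finset.univ.filter (fun y : F => G y + G (y + a) = G x + G (x + a)) := by
    intro z hz
    rcases Finset.mem_insert.mp hz with rfl | hz
    · exact hxmem
    · rw [Finset.mem_singleton.mp hz]; exact hxamem
  have hpaircard : ({x, x + a} : Finset F).card = 2 := Finset.card_pair hxa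
  constructor
  · intro h y hy
    have heq : ({x, x + a} : Finset F) =
        Finset.univ.filter (fun y : F => G y + G (y + a) = G x + G (x + a)) := by
      apply Finset.eq_of_subset_of_card_le hpairsub
      rw [hpaircard]
      exact le_of_eq h
    have : y ∈ ({x, x + a} : Finset F) := by
      rw [heq]; simp [hy]
    simpa using this
  · intro h
    unfold nabla delta
    rw [show Finset.univ.filter (fun y : F => G y + G (y + a) = G x + G (x + a))
        = ({x, x + a} : Finset F) from ?_, hpaircard]
    apply Finset.Subset.antisymm
    · intro y hy
      rcases h y (Finset.mem_filter.mp hy).2 with rfl | rfl <;> simp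
    · exact hpairsub

lemma forall_nabla_iff (G : F → F) [CharP F 2] (x : F) :
    (∀ a : F, a ≠ 0 → nabla G a x = 2) ↔
      ∀ u v : F, u ≠ x → v ≠ x → v ≠ u →
        G x + G u + G v + G (x + u + v) ≠ 0 := by
  constructor
  · intro H u v hu hv hvu heq
    have ha : x + u ≠ 0 := fun h => hu (by linear_combination -h + u * CharTwo.two_eq_zero (R := F))
    have h2 := (nabla_eq_two_iff G (x + u) x ha).mp (H _ ha)
    have hxxu : x + (x + u) = u := by
      rw [← add_assoc, CharTwo.add_self_eq_zero, zero_add]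
    have hveq : G v + G (v + (x + u)) = G x + G (x + (x + u)) := by
      rw [hxxu, show v + (x + u) = x + u + v from by ring]
      linear_combination heq - (G x + G u) * (CharTwo.two_eq_zero (R := F))
    rcases h2 v hveq with rfl | h
    · exact hv rfl
    · rw [hxxu] at h; exact hvu h
  · intro H a ha
    rw [nabla_eq_two_iff G a x ha]
    intro y hy
    by_contra hcon
    push_neg at hcon
    obtain ⟨hy1, hy2⟩ := hcon
    apply H (x + a) y (fun h => ha (by linear_combination h)) hy1 hy2
    rw [show x + (x + a) + y = y + a from by
      linear_combination x * (CharTwo.two_eq_zero (R := F))]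
    linear_combination hy + (G x + G (x + a)) * (CharTwo.two_eq_zero (R := F))


section Core
variable (n : ℕ) [CharP F 2]

/-- flat {0, p1, p3, p4}, α not among them. -/
lemma L0 (hcard : Fintype.card F = 2 ^ n) (α : F) (hα : α ≠ 0) (p1 p3 p4 : F) (h1 : p1 ≠ 0) (h1a : p1 ≠ α) (h3 : p3 ≠ 0) (h4 : p4 ≠ 0)
    (hsum : p1 + p3 + p4 = 0)
    (hG : α⁻¹ + p1⁻¹ + p3⁻¹ + p4⁻¹ = 0) :
    Tr n (α / (p1 + α)) = 0 := by
  have h2 : (2 : F) = 0 := CharTwo.two_eq_zero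
  have hp1α : p1 + α ≠ 0 := fun h => h1a (by linear_combination h - α * h2)
  have expand : (α⁻¹ + p1⁻¹ + p3⁻¹ + p4⁻¹) * (α * p1 * p3 * p4)
      = p1 * p3 * p4 + α * p3 * p4 + α * p1 * p4 + α * p1 * p3 := by
    field_simp
  have hG' : p1 * p3 * p4 + α * p3 * p4 + α * p1 * p4 + α * p1 * p3 = 0 := by
    rw [← expand, hG, zero_mul]
  have key2 : p3 * p4 * (p1 + α) = α * p1 ^ 2 := by
    linear_combination hG' - α * p1 * hsum
  have hp4' : p3 + p1 = p4 := by linear_combination hsum - p4 * h2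
  have e1 : (p3 / p1) ^ 2 + (p3 / p1) = (p3 * p4) / (p1 ^ 2) := by
    rw [← hp4']; field_simp
  have key : (p3 / p1) ^ 2 + (p3 / p1) = α / (p1 + α) := by
    rw [e1, div_eq_div_iff (pow_ne_zero 2 h1) hp1α]
    linear_combination key2
  rw [← key]
  exact Tr_AS n hcard _

/-- flat {α, p1, p3, p4}, 0 not among them. -/
lemma Lα (hcard : Fintype.card F = 2 ^ n) (α : F) (hα : α ≠ 0) (heven : Even n) (p1 p3 p4 : F) (h1 : p1 ≠ 0) (h1a : p1 ≠ α)
    (h3 : p3 ≠ 0) (h4 : p4 ≠ 0)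
    (hsum : α + p1 + p3 + p4 = 0)
    (hG : p1⁻¹ + p3⁻¹ + p4⁻¹ = 0) :
    Tr n (α / (p1 + α)) = 0 := by
  have h2 : (2 : F) = 0 := CharTwo.two_eq_zero
  have hp1α : p1 + α ≠ 0 := fun h => h1a (by linear_combination h - α * h2)
  have expand : (p1⁻¹ + p3⁻¹ + p4⁻¹) * (p1 * p3 * p4)
      = p3 * p4 + p1 * p4 + p1 * p3 := by
    field_simp
  have hG' : p3 * p4 + p1 * p4 + p1 * p3 = 0 := by
    rw [← expand, hG, zero_mul]
  have key2 : p3 * p4 = p1 * (p1 + α) := by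
    linear_combination hG' - p1 * hsum
  have hp4' : p3 + (p1 + α) = p4 := by linear_combination hsum - p4 * h2
  have e1 : (p3 / (p1 + α)) ^ 2 + (p3 / (p1 + α)) = (p3 * p4) / ((p1 + α) ^ 2) := by
    rw [← hp4']; field_simp
  have key : (p3 / (p1 + α)) ^ 2 + (p3 / (p1 + α)) = p1 / (p1 + α) := by
    rw [e1, div_eq_div_iff (pow_ne_zero 2 hp1α) hp1α]
    linear_combination (p1 + α) * key2
  have hsplit : α / (p1 + α) = (p3 / (p1 + α)) ^ 2 + (p3 / (p1 + α)) + 1 := by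
    rw [key]
    field_simp
    linear_combination -p1 * h2
  rw [hsplit, Tr_add n, Tr_AS n hcard, Tr_one n heven, add_zero]

/-- flat {0, α, p1, p1 + α}: forces p1 ∈ {αω, αω²}. -/
lemma Lboth (α : F) (hα : α ≠ 0) (ω : F) (hω : ω ^ 2 = ω + 1) (p1 : F) (h1 : p1 ≠ 0) (h1a : p1 ≠ α)
    (h3 : p1 ≠ α * ω) (h4 : p1 ≠ α * ω ^ 2)
    (hG : α⁻¹ + p1⁻¹ + (p1 + α)⁻¹ = 0) : False := by
  have h2 : (2 : F) = 0 := CharTwo.two_eq_zero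
  have hp1α : p1 + α ≠ 0 := fun h => h1a (by linear_combination h - α * h2)
  have expand : (α⁻¹ + p1⁻¹ + (p1 + α)⁻¹) * (α * p1 * (p1 + α))
      = p1 ^ 2 + 3 * α * p1 + α ^ 2 := by
    field_simp; ring
  have hG' : p1 ^ 2 + 3 * α * p1 + α ^ 2 = 0 := by
    rw [← expand, hG, zero_mul]
  have key : p1 ^ 2 + α * p1 + α ^ 2 = 0 := by
    linear_combination hG' - α * p1 * h2
  have hωsum : ω + ω ^ 2 = 1 := by linear_combination hω + ω * h2
  have hωprod : ω * ω ^ 2 = 1 := by linear_combination (ω + 1) * hω + ω * h2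
  have : (p1 + α * ω) * (p1 + α * ω ^ 2) = 0 := by
    linear_combination key + (p1 * α) * hωsum + α ^ 2 * hωprod
  rcases mul_eq_zero.mp this with h | h
  · exact h3 (by linear_combination h - (α * ω) * h2)
  · exact h4 (by linear_combination h - (α * ω ^ 2) * h2)

/-- flat with none of 0, α: impossible. -/
lemma Lnone (p1 p2 p3 p4 : F) (h1 : p1 ≠ 0) (h2' : p2 ≠ 0) (h3 : p3 ≠ 0) (h4 : p4 ≠ 0)
    (h12 : p1 ≠ p2) (h13 : p3 ≠ p1) (h23 : p3 ≠ p2)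
    (hsum : p1 + p2 + p3 + p4 = 0)
    (hG : p1⁻¹ + p2⁻¹ + p3⁻¹ + p4⁻¹ = 0) : False := by
  have h2 : (2 : F) = 0 := CharTwo.two_eq_zero
  have hp4 : p4 = p1 + p2 + p3 := by linear_combination hsum - (p1 + p2 + p3) * h2
  subst hp4
  have ha : p1 + p2 ≠ 0 := fun h => h12 (by linear_combination h - p2 * h2)
  have expand : (p1⁻¹ + p2⁻¹ + p3⁻¹ + (p1 + p2 + p3)⁻¹) * (p1 * p2 * p3 * (p1 + p2 + p3))
      = p2 * p3 * (p1 + p2 + p3) + p1 * p3 * (p1 + p2 + p3)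
        + p1 * p2 * (p1 + p2 + p3) + p1 * p2 * p3 := by
    field_simp
  have hG' : p2 * p3 * (p1 + p2 + p3) + p1 * p3 * (p1 + p2 + p3)
      + p1 * p2 * (p1 + p2 + p3) + p1 * p2 * p3 = 0 := by
    rw [← expand, hG, zero_mul]
  have hkey : (p1 + p2) * ((p3 + p1) * (p3 + p2)) = 0 := by
    linear_combination hG' - p1 * p2 * p3 * h2
  rcases mul_eq_zero.mp hkey with h | h
  · exact ha h
  rcases mul_eq_zero.mp h with h | h
  · exact h13 (by linear_combination h - p1 * h2)
  · exact h23 (by linear_combination h - p2 * h2)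

end Core

lemma Fmod_zero (α : F) : Fmod α 0 = α⁻¹ := by simp [Fmod]
lemma Fmod_self (α : F) (hα : α ≠ 0) : Fmod α α = 0 := by simp [Fmod, hα]
lemma Fmod_of (α z : F) (hz : z ≠ 0) (hza : z ≠ α) : Fmod α z = z⁻¹ := by
  simp [Fmod, hz, hza]

lemma flat_lemma (n : ℕ) [CharP F 2] (hcard : Fintype.card F = 2 ^ n) (heven : Even n)
    (α : F) (hα : α ≠ 0) (ω : F) (hω : ω ^ 2 = ω + 1)
    (p1 p2 p3 p4 : F)
    (h12 : p1 ≠ p2) (h13 : p1 ≠ p3) (h14 : p1 ≠ p4)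
    (h23 : p2 ≠ p3) (h24 : p2 ≠ p4) (h34 : p3 ≠ p4)
    (hsum : p1 + p2 + p3 + p4 = 0)
    (hG : Fmod α p1 + Fmod α p2 + Fmod α p3 + Fmod α p4 = 0)
    (hx0 : p1 ≠ 0) (hxa : p1 ≠ α) (hxw : p1 ≠ α * ω) (hxw2 : p1 ≠ α * ω ^ 2) :
    Tr n (α / (p1 + α)) = 0 := by
  have h2 : (2 : F) = 0 := CharTwo.two_eq_zero
  rw [Fmod_of α p1 hx0 hxa] at hG
  by_cases e2 : p2 = 0
  · subst e2
    rw [Fmod_zero] at hG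
    have h30 : p3 ≠ 0 := fun h => h23 h.symm
    have h40 : p4 ≠ 0 := fun h => h24 h.symm
    by_cases e3 : p3 = α
    · rw [e3, Fmod_self α hα] at hG
      have h4a : p4 ≠ α := fun h => h34 (e3.trans h.symm)
      rw [Fmod_of α p4 h40 h4a] at hG
      have hp4 : p4 = p1 + α := by linear_combination hsum - e3 - (p1 + α) * h2
      rw [hp4] at hG
      exact (Lboth α hα ω hω p1 hx0 hxa hxw hxw2 (by linear_combination hG)).elim
    · by_cases e4 : p4 = α
      · rw [e4, Fmod_self α hα] at hG
        rw [Fmod_of α p3 h30 e3] at hG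
        have hp3 : p3 = p1 + α := by linear_combination hsum - e4 - (p1 + α) * h2
        rw [hp3] at hG
        exact (Lboth α hα ω hω p1 hx0 hxa hxw hxw2 (by linear_combination hG)).elim
      · rw [Fmod_of α p3 h30 e3, Fmod_of α p4 h40 e4] at hG
        exact L0 n hcard α hα p1 p3 p4 hx0 hxa h30 h40
          (by linear_combination hsum) (by linear_combination hG)
  · by_cases e3 : p3 = 0
    · subst e3
      rw [Fmod_zero] at hG
      have h40 : p4 ≠ 0 := fun h => h34 h.symm
      by_cases e2a : p2 = α
      · rw [e2a, Fmod_self α hα] at hG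
        have h4a : p4 ≠ α := fun h => h24 (e2a.trans h.symm)
        rw [Fmod_of α p4 h40 h4a] at hG
        have hp4 : p4 = p1 + α := by linear_combination hsum - e2a - (p1 + α) * h2
        rw [hp4] at hG
        exact (Lboth α hα ω hω p1 hx0 hxa hxw hxw2 (by linear_combination hG)).elim
      · by_cases e4 : p4 = α
        · rw [e4, Fmod_self α hα] at hG
          rw [Fmod_of α p2 e2 e2a] at hG
          have hp2 : p2 = p1 + α := by linear_combination hsum - e4 - (p1 + α) * h2
          rw [hp2] at hG
          exact (Lboth α hα ω hω p1 hx0 hxa hxw hxw2 (by linear_combination hG)).elim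
        · rw [Fmod_of α p2 e2 e2a, Fmod_of α p4 h40 e4] at hG
          exact L0 n hcard α hα p1 p2 p4 hx0 hxa e2 h40
            (by linear_combination hsum) (by linear_combination hG)
    · by_cases e4 : p4 = 0
      · subst e4
        rw [Fmod_zero] at hG
        by_cases e2a : p2 = α
        · rw [e2a, Fmod_self α hα] at hG
          have h3a : p3 ≠ α := fun h => h23 (e2a.trans h.symm)
          rw [Fmod_of α p3 e3 h3a] at hG
          have hp3 : p3 = p1 + α := by linear_combination hsum - e2a - (p1 + α) * h2
          rw [hp3] at hG
          exact (Lboth α hα ω hω p1 hx0 hxa hxw hxw2 (by linear_combination hG)).elim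
        · by_cases e3a : p3 = α
          · rw [e3a, Fmod_self α hα] at hG
            rw [Fmod_of α p2 e2 e2a] at hG
            have hp2 : p2 = p1 + α := by linear_combination hsum - e3a - (p1 + α) * h2
            rw [hp2] at hG
            exact (Lboth α hα ω hω p1 hx0 hxa hxw hxw2 (by linear_combination hG)).elim
          · rw [Fmod_of α p2 e2 e2a, Fmod_of α p3 e3 e3a] at hG
            exact L0 n hcard α hα p1 p2 p3 hx0 hxa e2 e3
              (by linear_combination hsum) (by linear_combination hG)
      · by_cases e2a : p2 = α
        · rw [e2a, Fmod_self α hα] at hG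
          have h3a : p3 ≠ α := fun h => h23 (e2a.trans h.symm)
          have h4a : p4 ≠ α := fun h => h24 (e2a.trans h.symm)
          rw [Fmod_of α p3 e3 h3a, Fmod_of α p4 e4 h4a] at hG
          exact Lα n hcard α hα heven p1 p3 p4 hx0 hxa e3 e4
            (by linear_combination hsum - e2a) (by linear_combination hG)
        · by_cases e3a : p3 = α
          · rw [e3a, Fmod_self α hα] at hG
            have h4a : p4 ≠ α := fun h => h34 (e3a.trans h.symm)
            rw [Fmod_of α p2 e2 e2a, Fmod_of α p4 e4 h4a] at hG
            exact Lα n hcard α hα heven p1 p2 p4 hx0 hxa e2 e4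
              (by linear_combination hsum - e3a) (by linear_combination hG)
          · by_cases e4a : p4 = α
            · rw [e4a, Fmod_self α hα] at hG
              rw [Fmod_of α p2 e2 e2a, Fmod_of α p3 e3 e3a] at hG
              exact Lα n hcard α hα heven p1 p2 p3 hx0 hxa e2 e3
                (by linear_combination hsum - e4a) (by linear_combination hG)
            · rw [Fmod_of α p2 e2 e2a, Fmod_of α p3 e3 e3a,
                Fmod_of α p4 e4 e4a] at hG
              exact (Lnone p1 p2 p3 p4 hx0 e2 e3 e4 h12 (fun h => h13 h.symm)
                (fun h => h23 h.symm) hsum hG).elim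



/-- the column spectrum of `F_{0,α}` for even `n ≥ 4`. -/
theorem stmt_11 (n : ℕ) (hn : 4 ≤ n) (heven : Even n)
    [CharP F 2] (hcard : Fintype.card F = 2 ^ n)
    (α : F) (hα : α ≠ 0) (ω : F) (hω : ω ^ 2 = ω + 1) :
    ∀ x : F,
      ((∀ a : F, a ≠ 0 → nabla (Fmod α) a x = 2) ↔
        (x ≠ 0 ∧ x ≠ α ∧ x ≠ α * ω ∧ x ≠ α * ω ^ 2 ∧ Tr n (α / (x + α)) = 1)) := by
  have h2 : (2 : F) = 0 := CharTwo.two_eq_zero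
  have hω0 : ω ≠ 0 := by
    intro h; rw [h] at hω; simp at hω
  have hω1 : ω ≠ 1 := by
    intro h; rw [h] at hω
    exact one_ne_zero (by linear_combination hω + h2)
  have hω21 : ω ^ 2 ≠ 1 := by
    intro h; rw [hω] at h
    exact hω0 (by linear_combination h)
  have hωinv : ω⁻¹ = ω ^ 2 := by
    apply inv_eq_of_mul_eq_one_right
    linear_combination (ω + 1) * hω + ω * h2
  have hω2inv : (ω ^ 2)⁻¹ = ω := by
    apply inv_eq_of_mul_eq_one_right
    linear_combination (ω + 1) * hω + ω * h2
  have hαω0 : α * ω ≠ 0 := mul_ne_zero hα hω0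
  have hαω20 : α * ω ^ 2 ≠ 0 := mul_ne_zero hα (pow_ne_zero 2 hω0)
  have hαωa : α * ω ≠ α := fun h => hω1 (by
    have := mul_left_cancel₀ hα (h.trans (mul_one α).symm); exact this)
  have hαω2a : α * ω ^ 2 ≠ α := fun h => hω21 (by
    have := mul_left_cancel₀ hα (h.trans (mul_one α).symm); exact this)
  -- the exceptional vanishing flat {0, α, αω, αω²} sums to 0 under Fmod
  have hflat0 : Fmod α 0 + Fmod α α + Fmod α (α * ω) + Fmod α (α * ω ^ 2) = 0 := by
    rw [Fmod_zero, Fmod_self α hα, Fmod_of α _ hαω0 hαωa, Fmod_of α _ hαω20 hαω2a]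
    rw [mul_inv, mul_inv, hωinv, hω2inv]
    linear_combination α⁻¹ * hω + α⁻¹ * (1 + ω) * h2
  intro x
  rw [forall_nabla_iff]
  constructor
  · intro H
    -- x ∉ {0, α, αω, αω²}
    have hx0 : x ≠ 0 := by
      rintro rfl
      refine H α (α * ω) hα hαω0 hαωa ?_
      rw [show (0 : F) + α + α * ω = α * ω ^ 2 from by linear_combination (-α) * hω]
      linear_combination hflat0
    have hxa : x ≠ α := by
      rintro rfl
      refine H 0 (x * ω) (Ne.symm hα) hαωa hαω0 ?_
      rw [show x + 0 + x * ω = x * ω ^ 2 from by linear_combination (-x) * hω]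
      linear_combination hflat0
    have hxw : x ≠ α * ω := by
      rintro rfl
      refine H 0 α (Ne.symm hαω0) (Ne.symm hαωa) hα ?_
      rw [show α * ω + 0 + α = α * ω ^ 2 from by linear_combination (-α) * hω]
      linear_combination hflat0
    have hxw2 : x ≠ α * ω ^ 2 := by
      rintro rfl
      refine H 0 α (Ne.symm hαω20) (Ne.symm hαω2a) hα ?_
      rw [show α * ω ^ 2 + 0 + α = α * ω from by linear_combination α * hω + α * h2]
      linear_combination hflat0
    refine ⟨hx0, hxa, hxw, hxw2, ?_⟩
    rcases Tr_mem n hcard (α / (x + α)) with htr | htr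
    swap
    · exact htr
    -- Tr = 0 : construct a flat through x and contradict H
    exfalso
    have hxα : x + α ≠ 0 := fun h => hxa (by linear_combination h - α * h2)
    have hc0 : α / (x + α) ≠ 0 := div_ne_zero hα hxα
    obtain ⟨t, ht⟩ := AS_exists n (by omega) hcard _ htr
    have ht' : (t ^ 2 + t) * (x + α) = α := by
      rw [ht]; field_simp
    have ht0 : t ≠ 0 := by rintro rfl; rw [show (0:F)^2 + 0 = 0 from by ring] at ht
                           exact hc0 ht.symm
    have ht1 : t ≠ 1 := by
      rintro rfl
      rw [show (1:F)^2 + 1 = 2 from by ring, h2] at ht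
      exact hc0 ht.symm
    -- the quadratic-root trick : u = t x, v = (t+1) x
    have hux : t * x ≠ x := fun h => ht1 (by
      have : (t - 1) * x = 0 := by linear_combination h
      rcases mul_eq_zero.mp this with h' | h'
      · linear_combination h'
      · exact absurd h' hx0)
    have hvx : (t + 1) * x ≠ x := fun h => ht0 (by
      have : t * x = 0 := by linear_combination h
      rcases mul_eq_zero.mp this with h' | h'
      · exact h'
      · exact absurd h' hx0)
    have hvu : (t + 1) * x ≠ t * x := fun h => hx0 (by linear_combination h)
    have hαcube : ∀ s : F, (s ^ 2 + s) * (x + α) = α → s * x ≠ α := by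
      intro s hs h
      have : α ^ 3 = 0 := by
        linear_combination x ^ 2 * hs - ((x + α) * (s * x + α + x)) * h - (α ^ 2 * x) * h2
      exact hα ((pow_eq_zero_iff (three_ne_zero)).mp this)
    have huα : t * x ≠ α := hαcube t ht'
    have hvα : (t + 1) * x ≠ α := by
      refine hαcube (t + 1) ?_
      linear_combination ht' + (t + 1) * (x + α) * h2
    have hu0 : t * x ≠ 0 := mul_ne_zero ht0 hx0
    have hv0 : (t + 1) * x ≠ 0 := mul_ne_zero (fun h => ht1 (by linear_combination h - h2)) hx0
    refine H (t * x) ((t + 1) * x) hux hvx hvu ?_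
    rw [show x + t * x + (t + 1) * x = 0 from by linear_combination (t * x + x) * h2]
    rw [Fmod_of α x hx0 hxa, Fmod_of α _ hu0 huα, Fmod_of α _ hv0 hvα, Fmod_zero]
    -- x⁻¹ + (t x)⁻¹ + ((t+1) x)⁻¹ + α⁻¹ = 0
    have hN : α * x * t * (t + 1) ≠ 0 :=
      mul_ne_zero (mul_ne_zero (mul_ne_zero hα hx0) ht0)
        (fun h => ht1 (by linear_combination h - h2))
    have expand : (x⁻¹ + (t * x)⁻¹ + ((t + 1) * x)⁻¹ + α⁻¹) * (α * x * t * (t + 1))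
        = α * t * (t + 1) + α * (t + 1) + α * t + t * (t + 1) * x := by
      field_simp [show t + 1 ≠ 0 from fun h => ht1 (by linear_combination h - h2)]
    have hpoly : α * t * (t + 1) + α * (t + 1) + α * t + t * (t + 1) * x = 0 := by
      linear_combination ht' + α * (t + 1) * h2
    rcases mul_eq_zero.mp (expand.trans hpoly) with h | h
    · exact h
    · exact absurd h hN
  · rintro ⟨hx0, hxa, hxw, hxw2, htr⟩ u v hu hv hvu heq
    have h14 : x ≠ x + u + v := fun h => hvu (by linear_combination h + v * h2)
    have h24 : u ≠ x + u + v := fun h => hv (by linear_combination h + v * h2)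
    have h34 : v ≠ x + u + v := fun h => hu (by linear_combination h + u * h2)
    have := flat_lemma n hcard heven α hα ω hω x u v (x + u + v)
      (Ne.symm hu) (Ne.symm hv) h14 (fun h => hvu h.symm) h24 h34
      (CharTwo.add_self_eq_zero _) heq hx0 hxa hxw hxw2
    rw [htr] at this
    exact one_ne_zero this

end APNPaper
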